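/- arXiv:1711.01686 — 3 statements merged into one kernel-verified Lean document; each statement's English description precedes it below -/
import Mathlib

section
/- Let A and B be normal subgroups of a finite group G with G = AB, and let N be a minimal normal subgroup of G. If every subnormal subgroup of N is normal in A and every subnormal subgroup of N is normal in B, and N is a direct product of nonabelian simple groups, then N is simple. -/
/-- A subgroup `H` of `G` is subnormal if there is a chain
`H = H_0 ⊴ H_1 ⊴ ... ⊴ H_k = G` with each term normal in the next. -/
def IsSubnormal {G : Type*} [Group G] (H : Subgroup G) : Prop :=
  ∃ (k : ℕ) (c : Fin (k + 1) → Subgroup G), c 0 = H ∧ c (Fin.last k) = ⊤ ∧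
    ∀ i : Fin k, c i.castSucc ≤ c i.succ ∧
      ∀ g ∈ c i.succ, ∀ x ∈ c i.castSucc, g * x * g⁻¹ ∈ c i.castSucc

/-- Let `G = AB` with `A, B ⊴ G` and let `N` be a minimal normal subgroup of `G` which
is an internal direct product of nonabelian simple subgroups.  If every subnormal
subgroup of `N` is normal in `A` and in `B`, then `N` is simple. -/
theorem stmt_12 {G : Type*} [Group G] [Finite G] (A B N : Subgroup G)
    (hA : A.Normal) (hB : B.Normal) (hAB : A ⊔ B = ⊤)
    (hN : N.Normal) (hbot : N ≠ ⊥)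
    (hmin : ∀ K : Subgroup G, K.Normal → K ≤ N → K ≠ ⊥ → K = N)
    {n : ℕ} (Hs : Fin n → Subgroup G)
    (hle : ∀ i, Hs i ≤ N)
    (hsimple : ∀ i, IsSimpleGroup (Hs i))
    (hnonab : ∀ i, ∃ x ∈ Hs i, ∃ y ∈ Hs i, x * y ≠ y * x)
    (hcomm : ∀ i j, i ≠ j → ∀ x ∈ Hs i, ∀ y ∈ Hs j, Commute x y)
    (hind : iSupIndep Hs)
    (hsup : ⨆ i, Hs i = N)
    (hsubA : ∀ X : Subgroup ↥N, IsSubnormal X →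
      ∀ a ∈ A, ∀ x ∈ X.map N.subtype, a * x * a⁻¹ ∈ X.map N.subtype)
    (hsubB : ∀ X : Subgroup ↥N, IsSubnormal X →
      ∀ b ∈ B, ∀ x ∈ X.map N.subtype, b * x * b⁻¹ ∈ X.map N.subtype) :
    IsSimpleGroup ↥N := by
  -- n is positive
  have hn : 0 < n := by
    rcases Nat.eq_zero_or_pos n with h | h
    · subst h
      simp only [iSup_of_empty] at hsup
      exact absurd hsup.symm hbot
    · exact h
  set i : Fin n := ⟨0, hn⟩
  -- Hs i is normal in N : every element of N normalizes Hs i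
  have hnormN : ∀ g ∈ N, ∀ x ∈ Hs i, g * x * g⁻¹ ∈ Hs i := by
    have hsub : N ≤ Subgroup.normalizer (Hs i : Set G) := by
      rw [← hsup]
      refine iSup_le fun j => ?_
      rcases eq_or_ne j i with rfl | hj
      · exact Subgroup.le_normalizer
      · intro y hy
        rw [Subgroup.mem_normalizer_iff]
        intro x
        constructor
        · intro hx
          have h := (hcomm i j (Ne.symm hj) x hx y hy).eq
          rw [show y * x * y⁻¹ = x by rw [← h]; group]
          exact hx
        · intro hx
          have h := (hcomm i j (Ne.symm hj) _ hx y⁻¹ ((Hs j).inv_mem hy)).eq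
          have hxz : x = y * x * y⁻¹ := by
            calc x = y⁻¹ * (y * x * y⁻¹) * y := by group
            _ = y * x * y⁻¹ * y⁻¹ * y := by rw [← h]
            _ = y * x * y⁻¹ := by group
          rw [hxz]
          exact hx
    intro g hg x hx
    exact (Subgroup.mem_normalizer_iff.mp (hsub hg) x).mp hx
  -- (Hs i).subgroupOf N is subnormal
  have hsubn : IsSubnormal ((Hs i).subgroupOf N) := by
    refine ⟨1, ![(Hs i).subgroupOf N, ⊤], by simp, by simp [Fin.last], fun j => ?_⟩
    have hjj : j = 0 := Subsingleton.elim _ _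
    subst hjj
    refine ⟨by simp, fun g _ x hx => ?_⟩
    simp only [Fin.castSucc_zero, Fin.isValue, Matrix.cons_val_zero,
      Subgroup.mem_subgroupOf] at hx ⊢
    exact hnormN g g.2 x hx
  have hmap : ((Hs i).subgroupOf N).map N.subtype = Hs i := by
    rw [Subgroup.subgroupOf_map_subtype, inf_eq_left.mpr (hle i)]
  -- conjugation by A and B preserves Hs i
  have hconjA := hsubA _ hsubn
  have hconjB := hsubB _ hsubn
  rw [hmap] at hconjA hconjB
  -- Hs i normal in G
  have hnorm : (Hs i).Normal := by
    rw [← Subgroup.normalizer_eq_top_iff]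
    rw [← top_le_iff, ← hAB, sup_le_iff]
    constructor
    · intro a ha
      rw [Subgroup.mem_normalizer_iff]
      intro x
      constructor
      · exact hconjA a ha x
      · intro hx
        have := hconjA a⁻¹ (A.inv_mem ha) _ hx
        simpa [mul_assoc] using this
    · intro b hb
      rw [Subgroup.mem_normalizer_iff]
      intro x
      constructor
      · exact hconjB b hb x
      · intro hx
        have := hconjB b⁻¹ (B.inv_mem hb) _ hx
        simpa [mul_assoc] using this
  have hne : Hs i ≠ ⊥ := by
    intro h
    obtain ⟨x, hx, y, hy, hxy⟩ := hnonab i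
    rw [h, Subgroup.mem_bot] at hx hy
    exact hxy (by rw [hx, hy])
  have heq : Hs i = N := hmin _ hnorm (hle i) hne
  exact heq ▸ hsimple i
end

section
/- Let G be a finite group in which every chief factor is a simple group (a c-supersoluble group). Then there is a perfect normal subgroup D of G such that G/D is supersoluble. -/
/-- `H/K` is a chief factor of `G`: both are normal in `G`, `K < H`, and there is
no normal subgroup of `G` strictly between `K` and `H`. -/
def IsChiefFactor (G : Type*) [Group G] (H K : Subgroup G) : Prop :=
  H.Normal ∧ K.Normal ∧ K < H ∧ ∀ L : Subgroup G, L.Normal → K < L → L ≤ H → L = H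

/-- The factor `H/K` is a simple group: `K < H` and there is no intermediate
subgroup normalized by `H` other than `K` and `H`. -/
def IsSimpleFactor (G : Type*) [Group G] (H K : Subgroup G) : Prop :=
  K < H ∧ ∀ L : Subgroup G, K ≤ L → L ≤ H →
    (∀ h ∈ H, ∀ x ∈ L, h * x * h⁻¹ ∈ L) → L = K ∨ L = H

/-- A (finite) group is supersoluble iff every chief factor is cyclic of prime order. -/
def IsSupersoluble (G : Type*) [Group G] : Prop :=
  ∀ H K : Subgroup G, IsChiefFactor G H K → ∃ p : ℕ, p.Prime ∧ K.relIndex H = p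

/-- A group is c-supersoluble iff every chief factor is a simple group. -/
def IsCSupersoluble (G : Type*) [Group G] : Prop :=
  ∀ H K : Subgroup G, IsChiefFactor G H K → IsSimpleFactor G H K

section Aux

variable {G Q : Type*} [Group G] [Group Q]

lemma aux_derivedSeries_succ_le (n : ℕ) : derivedSeries G (n + 1) ≤ derivedSeries G n := by
  rw [derivedSeries_succ]
  exact Subgroup.commutator_le.mpr fun p hp q hq =>
    mul_mem (mul_mem (mul_mem hp hq) (inv_mem hp)) (inv_mem hq)

lemma aux_derivedSeries_antitone : Antitone (derivedSeries G) :=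
  antitone_nat_of_succ_le aux_derivedSeries_succ_le

/-- Pull back a chief factor along a surjective hom. -/
lemma chief_comap (φ : G →* Q) (hφ : Function.Surjective φ) {H K : Subgroup Q}
    (hc : IsChiefFactor Q H K) : IsChiefFactor G (H.comap φ) (K.comap φ) := by
  obtain ⟨hHn, hKn, hlt, hmax⟩ := hc
  have hcomap_inj := Subgroup.comap_injective (f := φ) hφ
  refine ⟨hHn.comap φ, hKn.comap φ, ?_, ?_⟩
  · exact lt_of_le_of_ne (Subgroup.comap_mono hlt.le)
      (fun e => hlt.ne (hcomap_inj e))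
  · intro L hLn hKL hLH
    have hker : φ.ker ≤ L := le_trans (fun x hx => by
      simp only [Subgroup.mem_comap, MonoidHom.mem_ker.mp hx, one_mem]) hKL.le
    have hLmap : (L.map φ).Normal := Subgroup.Normal.map hLn φ hφ
    have hKle : K ≤ L.map φ := by
      have := Subgroup.map_mono (f := φ) hKL.le
      rwa [Subgroup.map_comap_eq_self_of_surjective hφ] at this
    have hKlt : K < L.map φ := by
      refine lt_of_le_of_ne hKle fun e => hKL.ne ?_
      rw [← Subgroup.comap_map_eq_self hker, ← e]
    have hHle : L.map φ ≤ H := by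
      have := Subgroup.map_mono (f := φ) hLH
      rwa [Subgroup.map_comap_eq_self_of_surjective hφ] at this
    have := hmax (L.map φ) hLmap hKlt hHle
    rw [← Subgroup.comap_map_eq_self hker, this]

/-- Push forward a simple factor along a surjective hom. -/
lemma simple_map (φ : G →* Q) (hφ : Function.Surjective φ) {H K : Subgroup Q}
    (hlt : K < H) (hs : IsSimpleFactor G (H.comap φ) (K.comap φ)) :
    IsSimpleFactor Q H K := by
  refine ⟨hlt, fun L hKL hLH hnorm => ?_⟩
  have h2 := hs.2 (L.comap φ) (Subgroup.comap_mono hKL) (Subgroup.comap_mono hLH) ?_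
  · rcases h2 with h | h
    · left
      rw [← Subgroup.map_comap_eq_self_of_surjective hφ L, h,
        Subgroup.map_comap_eq_self_of_surjective hφ]
    · right
      rw [← Subgroup.map_comap_eq_self_of_surjective hφ L, h,
        Subgroup.map_comap_eq_self_of_surjective hφ]
  · intro h hh x hx
    simp only [Subgroup.mem_comap, map_mul, map_inv] at *
    exact hnorm _ hh _ hx

/-- A simple factor `H/K` with `K` normal gives a simple quotient group. -/
lemma simpleFactor_isSimpleGroup {H K : Subgroup Q} (hKn : K.Normal)
    (hs : IsSimpleFactor Q H K) :
    letI : (K.subgroupOf H).Normal := ⟨fun n hn g => by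
      simpa [Subgroup.mem_subgroupOf] using hKn.conj_mem _ hn g⟩
    IsSimpleGroup (H ⧸ K.subgroupOf H) := by
  letI : (K.subgroupOf H).Normal := ⟨fun n hn g => by
    simpa [Subgroup.mem_subgroupOf] using hKn.conj_mem _ hn g⟩
  obtain ⟨hlt, hmax⟩ := hs
  have hKH : K ≤ H := hlt.le
  obtain ⟨x, hxH, hxK⟩ := SetLike.exists_of_lt hlt
  refine { toNontrivial := ?_, eq_bot_or_eq_top_of_normal := ?_ }
  · -- Nontrivial
    refine ⟨⟨QuotientGroup.mk ⟨x, hxH⟩, 1, fun e => hxK ?_⟩⟩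
    have := (QuotientGroup.eq_one_iff (⟨x, hxH⟩ : H)).mp e
    simpa [Subgroup.mem_subgroupOf] using this
  · intro N hNn
    set π := QuotientGroup.mk' (K.subgroupOf H)
    have hπsurj : Function.Surjective π := QuotientGroup.mk'_surjective _
    set M : Subgroup H := N.comap π with hM
    have hMn : M.Normal := hNn.comap π
    have hkerM : (K.subgroupOf H) ≤ M := by
      intro y hy
      simp only [hM, Subgroup.mem_comap]
      rw [show π y = 1 from (QuotientGroup.eq_one_iff y).mpr hy]
      exact one_mem N
    set L : Subgroup Q := M.map H.subtype with hL
    have hKL : K ≤ L := by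
      intro k hk
      exact ⟨⟨k, hKH hk⟩, hkerM (by simpa [Subgroup.mem_subgroupOf] using hk), rfl⟩
    have hLH : L ≤ H := by
      rintro _ ⟨m, hm, rfl⟩; exact m.2
    have hnorm : ∀ h ∈ H, ∀ z ∈ L, h * z * h⁻¹ ∈ L := by
      rintro h hh _ ⟨m, hm, rfl⟩
      exact ⟨⟨h, hh⟩ * m * ⟨h, hh⟩⁻¹, hMn.conj_mem m hm ⟨h, hh⟩, rfl⟩
    rcases hmax L hKL hLH hnorm with hLK | hLHeq
    · left
      have hMK : M = K.subgroupOf H := by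
        refine le_antisymm ?_ hkerM
        intro m hm
        have : (m : Q) ∈ K := hLK ▸ ⟨m, hm, rfl⟩
        simpa [Subgroup.mem_subgroupOf] using this
      rw [← Subgroup.map_comap_eq_self_of_surjective hπsurj N, ← hM, hMK]
      refine le_bot_iff.mp ?_
      rintro _ ⟨y, hy, rfl⟩
      exact Subgroup.mem_bot.mpr ((QuotientGroup.eq_one_iff y).mpr hy)
    · right
      have hMtop : M = ⊤ := by
        rw [eq_top_iff]
        rintro ⟨m, hm⟩ -
        obtain ⟨m', hm', he⟩ := hLHeq.symm ▸ hm
        have : m' = ⟨m, hm⟩ := Subtype.ext he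
        rwa [← this]
      rw [← Subgroup.map_comap_eq_self_of_surjective hπsurj N, ← hM, hMtop]
      rw [eq_top_iff]
      rintro q -
      obtain ⟨y, rfl⟩ := hπsurj q
      exact ⟨y, trivial, rfl⟩

end Aux

/-- A finite c-supersoluble group `G` has a perfect normal subgroup `D` with `G/D`
supersoluble (take `D` to be the supersoluble residual). -/
theorem stmt_14 {G : Type*} [Group G] [Finite G] (h : IsCSupersoluble G) :
    ∃ (D : Subgroup G) (hD : D.Normal), ⁅D, D⁆ = D ∧ IsSupersoluble (G ⧸ D) := by
  -- stabilization of the derived series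
  obtain ⟨m, n, hmn, hmeq⟩ : ∃ m n : ℕ, m < n ∧ derivedSeries G m = derivedSeries G n := by
    obtain ⟨a, b, hab, he⟩ := Finite.exists_ne_map_eq_of_infinite (derivedSeries G)
    rcases hab.lt_or_gt with hl | hl
    · exact ⟨a, b, hl, he⟩
    · exact ⟨b, a, hl, he.symm⟩
  set D := derivedSeries G m with hD
  have hstab : derivedSeries G (m + 1) = D := by
    refine le_antisymm (aux_derivedSeries_succ_le m) ?_
    exact le_of_eq_of_le hmeq (aux_derivedSeries_antitone hmn)
  refine ⟨D, derivedSeries_normal G m, ?_, ?_⟩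
  · exact (derivedSeries_succ G m).symm.trans hstab
  · -- G ⧸ D is solvable
    haveI hDn : D.Normal := derivedSeries_normal G m
    set φ := QuotientGroup.mk' D with hφdef
    have hφsurj : Function.Surjective φ := QuotientGroup.mk'_surjective D
    haveI : Group.IsSolvable (G ⧸ D) := by
      refine ⟨⟨m, ?_⟩⟩
      rw [← map_derivedSeries_eq hφsurj, ← hD]
      refine le_bot_iff.mp ?_
      rintro _ ⟨y, hy, rfl⟩
      exact Subgroup.mem_bot.mpr ((QuotientGroup.eq_one_iff y).mpr hy)
    intro H K hc
    have hKn : K.Normal := hc.2.1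
    have hlt : K < H := hc.2.2.1
    -- pull back the chief factor, apply c-supersolubility, push forward
    have hsimple : IsSimpleFactor (G ⧸ D) H K :=
      simple_map φ hφsurj hlt (h _ _ (chief_comap φ hφsurj hc))
    letI : (K.subgroupOf H).Normal := ⟨fun nn hn g => by
      simpa [Subgroup.mem_subgroupOf] using hKn.conj_mem _ hn g⟩
    haveI hQsimple : IsSimpleGroup (H ⧸ K.subgroupOf H) :=
      simpleFactor_isSimpleGroup hKn hsimple
    haveI : Group.IsSolvable (H ⧸ K.subgroupOf H) := inferInstance
    have hcomm : ∀ a b : (H ⧸ K.subgroupOf H), a * b = b * a :=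
      IsSimpleGroup.comm_iff_isSolvable.mpr inferInstance
    letI : CommGroup (H ⧸ K.subgroupOf H) :=
      { (inferInstance : Group (H ⧸ K.subgroupOf H)) with mul_comm := hcomm }
    refine ⟨Nat.card (H ⧸ K.subgroupOf H), IsSimpleGroup.prime_card, ?_⟩
    rfl
end

section
/- Let G be a finite group with normal subgroups Z ≤ S such that every chief factor of G below Z is cyclic of prime order, S/Z is a direct product of G-invariant simple nonabelian groups, and G/S is supersoluble. Then every chief factor of G is simple, i.e., G is c-supersoluble. -/
set_option maxHeartbeats 1000000
open Pointwise


section Helpers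

variable {G : Type*} [Group G]

/-- Dedekind modular law for subgroups, with the middle subgroup normal. -/
lemma ded {A B C : Subgroup G} (hB : B.Normal) (hAC : A ≤ C) :
    (A ⊔ B) ⊓ C = A ⊔ (B ⊓ C) := by
  haveI := hB
  apply le_antisymm
  · intro x hx
    rw [Subgroup.mem_inf] at hx
    obtain ⟨hx1, hx2⟩ := hx
    have hx' : x ∈ (A : Set G) * (B : Set G) := by
      rw [← Subgroup.mul_normal A B]; exact hx1
    obtain ⟨a, ha, b, hb, rfl⟩ := hx'
    have hbC : b ∈ C := by
      have : a⁻¹ * (a * b) ∈ C := mul_mem (inv_mem (hAC ha)) hx2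
      simpa using this
    exact mul_mem ((le_sup_left : A ≤ A ⊔ (B ⊓ C)) ha)
      ((le_sup_right : B ⊓ C ≤ A ⊔ (B ⊓ C)) (Subgroup.mem_inf.mpr ⟨hb, hbC⟩))
  · exact sup_le (le_inf le_sup_left hAC)
      (le_inf (inf_le_left.trans le_sup_right) inf_le_right)

/-- If the relative index of `K` in `H` is prime, there are no intermediate subgroups. -/
lemma rigid {K H : Subgroup G} {p : ℕ} (hp : p.Prime) (hKH : K ≤ H)
    (h : K.relIndex H = p) {L : Subgroup G} (hKL : K ≤ L) (hLH : L ≤ H) :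
    L = K ∨ L = H := by
  have hm := Subgroup.relIndex_mul_relIndex K L H hKL hLH
  rw [h] at hm
  rcases hp.eq_one_or_self_of_dvd (K.relIndex L) ⟨L.relIndex H, hm.symm⟩ with h1 | h2
  · left
    exact le_antisymm (Subgroup.relIndex_eq_one.mp h1) hKL
  · right
    rw [h2] at hm
    have h3 : p * L.relIndex H = p * 1 := by rw [mul_one]; exact hm
    have h4 := Nat.eq_of_mul_eq_mul_left hp.pos h3
    exact le_antisymm hLH (Subgroup.relIndex_eq_one.mp h4)

/-- Pointwise normalization implies inclusion in the normalizer. -/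
lemma norm_le {A L : Subgroup G} (h : ∀ a ∈ A, ∀ x ∈ L, a * x * a⁻¹ ∈ L) :
    A ≤ Subgroup.normalizer (L : Set G) := by
  intro a ha
  rw [Subgroup.mem_normalizer_iff]
  intro x
  constructor
  · intro hx; exact h a ha x hx
  · intro hx
    have h2 := h a⁻¹ (inv_mem ha) _ hx
    have h3 : a⁻¹ * (a * x * a⁻¹) * a⁻¹⁻¹ = x := by group
    rwa [h3] at h2

/-- Chief factors push forward along surjections whose kernel lies below the bottom. -/
lemma chief_map {G' : Type*} [Group G'] (f : G →* G') (hf : Function.Surjective f)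
    {H K : Subgroup G} (hc : IsChiefFactor G H K) (hker : f.ker ≤ K) :
    IsChiefFactor G' (H.map f) (K.map f) := by
  obtain ⟨hHn, hKn, hKH, hmin⟩ := hc
  have hkerH : f.ker ≤ H := hker.trans hKH.le
  have hcomK : (K.map f).comap f = K := by
    rw [Subgroup.comap_map_eq, sup_eq_left.mpr hker]
  have hcomH : (H.map f).comap f = H := by
    rw [Subgroup.comap_map_eq, sup_eq_left.mpr hkerH]
  refine ⟨hHn.map f hf, hKn.map f hf, ?_, ?_⟩
  · refine lt_of_le_of_ne (Subgroup.map_mono hKH.le) fun he => ?_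
    have : K = H := by rw [← hcomK, ← hcomH, he]
    exact hKH.ne this
  · intro L' hL'n hKL' hL'H
    have h1 : K < L'.comap f := by
      refine lt_of_le_of_ne ?_ fun he => ?_
      · rw [← hcomK]; exact Subgroup.comap_mono hKL'.le
      · have : K.map f = L' := by
          rw [he, Subgroup.map_comap_eq_self_of_surjective hf]
        exact hKL'.ne this
    have h2 : L'.comap f ≤ H := by rw [← hcomH]; exact Subgroup.comap_mono hL'H
    have h3 := hmin _ (by haveI := hL'n; infer_instance) h1 h2
    calc L' = (L'.comap f).map f := (Subgroup.map_comap_eq_self_of_surjective hf L').symm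
      _ = H.map f := by rw [h3]

/-- Relative index is preserved under pushing forward along a surjection whose
kernel lies in the bottom subgroup. -/
lemma relindex_map_of_ker_le {G' : Type*} [Group G'] (f : G →* G')
    {H K : Subgroup G} (hker : f.ker ≤ K) :
    (K.map f).relIndex (H.map f) = K.relIndex H := by
  have h := Subgroup.relIndex_comap (K.map f) f H
  rw [Subgroup.comap_map_eq, sup_eq_left.mpr hker] at h
  exact h.symm

end Helpers

section Product

variable {Q : Type*} [Group Q] {n : ℕ} {Hs : Fin n → Subgroup Q}

/-- In a simple nonabelian subgroup, an element commuting with everything is trivial. -/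
lemma center_triv (hsimple : ∀ i, IsSimpleGroup (Hs i))
    (hnonab : ∀ i, ∃ x ∈ Hs i, ∃ y ∈ Hs i, x * y ≠ y * x)
    (i : Fin n) {x : Q} (hx : x ∈ Hs i) (hc : ∀ y ∈ Hs i, Commute x y) : x = 1 := by
  haveI := hsimple i
  rcases IsSimpleGroup.eq_bot_or_eq_top_of_normal (Subgroup.center ↥(Hs i)) inferInstance
    with h | h
  · have hmem : (⟨x, hx⟩ : ↥(Hs i)) ∈ Subgroup.center ↥(Hs i) := by
      rw [Subgroup.mem_center_iff]
      intro g
      exact Subtype.ext (hc g g.2).symm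
    rw [h] at hmem
    simpa using congrArg Subtype.val (Subgroup.mem_bot.mp hmem)
  · exfalso
    obtain ⟨a, ha, b, hb, hab⟩ := hnonab i
    have hmem : (⟨a, ha⟩ : ↥(Hs i)) ∈ Subgroup.center ↥(Hs i) := by
      rw [h]; exact Subgroup.mem_top _
    rw [Subgroup.mem_center_iff] at hmem
    exact hab (congrArg Subtype.val (hmem ⟨b, hb⟩)).symm

/-- A normal subgroup not containing a simple subgroup is disjoint from it. -/
lemma not_le_disjoint (hsimple : ∀ i, IsSimpleGroup (Hs i)) (i : Fin n)
    {W : Subgroup Q} (hW : W.Normal) (h : ¬ Hs i ≤ W) : Disjoint (Hs i) W := by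
  haveI := hsimple i
  haveI := hW
  rcases IsSimpleGroup.eq_bot_or_eq_top_of_normal (W.subgroupOf (Hs i)) inferInstance
    with hb | ht
  · rw [Subgroup.subgroupOf_eq_bot] at hb
    exact hb.symm
  · rw [Subgroup.subgroupOf_eq_top] at ht
    exact absurd ht h

/-- A normal subgroup of the product of `G`-invariant simple nonabelian groups is a
join of some of the factors. -/
lemma normal_eq_biSup (hinv : ∀ i, (Hs i).Normal)
    (hsimple : ∀ i, IsSimpleGroup (Hs i))
    (hnonab : ∀ i, ∃ x ∈ Hs i, ∃ y ∈ Hs i, x * y ≠ y * x)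
    (hind : iSupIndep Hs)
    {W : Subgroup Q} (hW : W.Normal) (hle : W ≤ ⨆ i, Hs i) :
    W = ⨆ (i) (_ : Hs i ≤ W), Hs i := by
  classical
  have hcomm : Pairwise fun i j => ∀ x y : Q, x ∈ Hs i → y ∈ Hs j → Commute x y :=
    fun i j hij x y hx hy =>
      Subgroup.commute_of_normal_of_disjoint _ _ (hinv i) (hinv j)
        (hind.pairwiseDisjoint hij) x y hx hy
  refine le_antisymm ?_ (iSup_le fun i => iSup_le fun hi => hi)
  intro w hw
  have hwmem : w ∈ (Subgroup.noncommPiCoprod hcomm).range := by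
    rw [Subgroup.noncommPiCoprod_range]; exact hle hw
  obtain ⟨u, rfl⟩ := MonoidHom.mem_range.mp hwmem
  have hu1 : ∀ j, ¬ Hs j ≤ W → (u j : Q) = 1 := by
    intro j hj
    have hdisj := not_le_disjoint hsimple j hW hj
    set v : ∀ i, Hs i := Function.update u j 1 with hv
    have hueq : u = v * Pi.mulSingle j (u j) := by
      funext i
      by_cases hij : i = j
      · subst hij; simp [hv]
      · simp [hv, Function.update_of_ne hij, Pi.mulSingle_eq_of_ne hij]
    have hdecomp : Subgroup.noncommPiCoprod hcomm u
        = Subgroup.noncommPiCoprod hcomm v * (u j : Q) := by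
      conv_lhs => rw [hueq]
      rw [map_mul, Subgroup.noncommPiCoprod_mulSingle]
    apply center_triv hsimple hnonab j (u j).2
    intro y hy
    have hyW : Commute y (Subgroup.noncommPiCoprod hcomm u) :=
      Subgroup.commute_of_normal_of_disjoint _ _ (hinv j) hW hdisj y _ hy hw
    have hyv : Commute y (Subgroup.noncommPiCoprod hcomm v) := by
      have hcent : Subgroup.noncommPiCoprod hcomm v ∈ Subgroup.centralizer {y} := by
        rw [Subgroup.noncommPiCoprod_apply]
        apply Subgroup.noncommProd_mem
        intro i _
        rw [Subgroup.mem_centralizer_singleton_iff]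
        by_cases hij : i = j
        · subst hij; simp [hv]
        · have hvi : (v i : Q) = u i := by simp [hv, Function.update_of_ne hij]
          rw [hvi]
          exact (hcomm hij (u i : Q) y (u i).2 hy).symm.eq.symm
      rw [Subgroup.mem_centralizer_singleton_iff] at hcent
      exact Commute.symm hcent
    have : (u j : Q) = (Subgroup.noncommPiCoprod hcomm v)⁻¹
        * Subgroup.noncommPiCoprod hcomm u := by
      rw [hdecomp]; group
    rw [this]
    exact ((hyv.inv_right.mul_right hyW)).symm
  rw [Subgroup.noncommPiCoprod_apply]
  apply Subgroup.noncommProd_mem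
  intro i _
  by_cases hi : Hs i ≤ W
  · exact Subgroup.mem_iSup_of_mem i (Subgroup.mem_iSup_of_mem hi (u i).2)
  · rw [hu1 i hi]; exact one_mem _

/-- A chief factor lying inside the product of invariant simple nonabelian groups
is a simple factor. -/
lemma simple_factor_mid (hinv : ∀ i, (Hs i).Normal)
    (hsimple : ∀ i, IsSimpleGroup (Hs i))
    (hnonab : ∀ i, ∃ x ∈ Hs i, ∃ y ∈ Hs i, x * y ≠ y * x)
    (hind : iSupIndep Hs)
    {M N : Subgroup Q} (hc : IsChiefFactor Q M N) (hle : M ≤ ⨆ i, Hs i) :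
    ∀ L : Subgroup Q, N ≤ L → L ≤ M →
      (∀ h ∈ M, ∀ x ∈ L, h * x * h⁻¹ ∈ L) → L = N ∨ L = M := by
  obtain ⟨hMn, hNn, hNM, hmin⟩ := hc
  haveI := hMn; haveI := hNn
  have hMeq := normal_eq_biSup hinv hsimple hnonab hind hMn hle
  have hex : ∃ i, Hs i ≤ M ∧ ¬ Hs i ≤ N := by
    by_contra hcon
    push_neg at hcon
    have : M ≤ N := by
      conv_lhs => rw [hMeq]
      exact iSup_le fun i => iSup_le fun hi => hcon i hi
    exact hNM.not_ge this
  obtain ⟨i0, hi0M, hi0N⟩ := hex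
  have hdisj : Disjoint (Hs i0) N := not_le_disjoint hsimple i0 hNn hi0N
  have hsupM : N ⊔ Hs i0 = M := by
    apply hmin
    · haveI := hinv i0; infer_instance
    · exact lt_of_le_of_ne le_sup_left fun he => hi0N (by rw [he]; exact le_sup_right)
    · exact sup_le hNM.le hi0M
  intro L hNL hLM hnorm
  have hL0n : (L.subgroupOf (Hs i0)).Normal := by
    constructor
    rintro ⟨x, hxi⟩ hx ⟨g, hgi⟩
    simp only [Subgroup.mem_subgroupOf] at hx ⊢
    exact hnorm g (hi0M hgi) x hx
  haveI := hsimple i0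
  rcases IsSimpleGroup.eq_bot_or_eq_top_of_normal _ hL0n with hb | ht
  · left
    rw [Subgroup.subgroupOf_eq_bot] at hb
    apply le_antisymm _ hNL
    intro x hx
    have hxM : x ∈ N ⊔ Hs i0 := by rw [hsupM]; exact hLM hx
    have hx' : x ∈ (N : Set Q) * (Hs i0 : Set Q) := by
      rw [← Subgroup.normal_mul]; exact hxM
    obtain ⟨a, ha, b, hb', rfl⟩ := hx'
    have hbL : b ∈ L := by
      have : a⁻¹ * (a * b) ∈ L := mul_mem (inv_mem (hNL ha)) hx
      simpa using this
    have hbbot : b ∈ (⊥ : Subgroup Q) := hb.le_bot (Subgroup.mem_inf.mpr ⟨hbL, hb'⟩)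
    rw [Subgroup.mem_bot] at hbbot
    subst hbbot
    simpa using ha
  · right
    rw [Subgroup.subgroupOf_eq_top] at ht
    apply le_antisymm hLM
    rw [← hsupM]
    exact sup_le hNL ht

end Product

section Middle

variable {G : Type*} [Group G]

/-- The middle case of the main theorem: a chief factor neither below nor above `S`
modulo `K`, with `Z ⊓ H ≤ K`, is handled by the product structure of `S/Z`. -/
lemma middle_case (Z S : Subgroup G) [Z.Normal] [S.Normal] (hZS : Z ≤ S)
    {n : ℕ} (Hs : Fin n → Subgroup (G ⧸ Z))
    (hinv : ∀ i, (Hs i).Normal)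
    (hsimple : ∀ i, IsSimpleGroup (Hs i))
    (hnonab : ∀ i, ∃ x ∈ Hs i, ∃ y ∈ Hs i, x * y ≠ y * x)
    (hind : iSupIndep Hs)
    (hsup : ⨆ i, Hs i = S.map (QuotientGroup.mk' Z))
    {H K : Subgroup G} (hc : IsChiefFactor G H K)
    (hA : ¬ H ⊓ S ≤ K) (hZH : Z ⊓ H ≤ K)
    {L : Subgroup G} (hKL : K ≤ L) (hLH : L ≤ H)
    (hnorm : ∀ h ∈ H, ∀ x ∈ L, h * x * h⁻¹ ∈ L) : L = K ∨ L = H := by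
  obtain ⟨hHn, hKn, hKH, hmin⟩ := hc
  haveI := hHn; haveI := hKn
  have hsupS : K ⊔ (H ⊓ S) = H := hmin _ inferInstance
    (lt_of_le_of_ne le_sup_left fun he => hA (le_sup_right.trans he.symm.le))
    (sup_le hKH.le inf_le_left)
  have hlt1 : K ⊓ S < H ⊓ S := by
    refine lt_of_le_of_ne (inf_le_inf_right S hKH.le) fun he => hA ?_
    rw [← he]; exact inf_le_left
  have hchief1 : IsChiefFactor G (H ⊓ S) (K ⊓ S) := by
    refine ⟨inferInstance, inferInstance, hlt1, ?_⟩
    intro L' hL'n hlt hle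
    have hL'S : L' ≤ S := hle.trans inf_le_right
    have hKL' : K < K ⊔ L' := lt_of_le_of_ne le_sup_left fun he =>
      hlt.not_ge (le_inf (le_sup_right.trans he.symm.le) hL'S)
    have hH : K ⊔ L' = H := hmin _ (by haveI := hL'n; infer_instance) hKL'
      (sup_le hKH.le (hle.trans inf_le_left))
    calc L' = L' ⊔ (K ⊓ S) := (sup_eq_left.mpr hlt.le).symm
      _ = (L' ⊔ K) ⊓ S := (ded hKn hL'S).symm
      _ = H ⊓ S := by rw [sup_comm L' K, hH]
  have hZH1 : Z ⊓ (H ⊓ S) ≤ K ⊓ S := by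
    intro x hx
    rw [Subgroup.mem_inf, Subgroup.mem_inf] at hx
    exact Subgroup.mem_inf.mpr ⟨hZH (Subgroup.mem_inf.mpr ⟨hx.1, hx.2.1⟩), hx.2.2⟩
  have hlt2 : (K ⊓ S) ⊔ Z < (H ⊓ S) ⊔ Z := by
    refine lt_of_le_of_ne (sup_le_sup_right hlt1.le Z) fun he => ?_
    have h1 : H ⊓ S ≤ ((K ⊓ S) ⊔ Z) ⊓ (H ⊓ S) := le_inf (by rw [he]; exact le_sup_left) le_rfl
    rw [ded ‹Z.Normal› hlt1.le] at h1
    exact hlt1.not_ge (h1.trans (sup_le le_rfl hZH1))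
  have hchief2 : IsChiefFactor G ((H ⊓ S) ⊔ Z) ((K ⊓ S) ⊔ Z) := by
    obtain ⟨_, _, _, hmin1⟩ := hchief1
    refine ⟨inferInstance, inferInstance, hlt2, ?_⟩
    intro L' hL'n hlt hle
    have hZL' : Z ≤ L' := le_sup_right.trans hlt.le
    by_cases hcase : L' ⊓ (H ⊓ S) ≤ K ⊓ S
    · exfalso
      have h1 : L' ≤ (Z ⊔ (H ⊓ S)) ⊓ L' := le_inf (hle.trans (sup_comm _ _).le) le_rfl
      rw [ded (inferInstance : (H ⊓ S).Normal) hZL'] at h1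
      have h2 : L' ≤ Z ⊔ (K ⊓ S) := h1.trans (sup_le le_sup_left
        (le_trans (by rw [inf_comm]; exact hcase) le_sup_right))
      rw [sup_comm] at h2
      exact hlt.not_ge h2
    · have hKlt : K ⊓ S < L' ⊓ (H ⊓ S) :=
        lt_of_le_of_ne (le_inf (le_sup_left.trans hlt.le) hlt1.le) fun he =>
          hcase he.symm.le
      have heq : L' ⊓ (H ⊓ S) = H ⊓ S :=
        hmin1 _ (by haveI := hL'n; infer_instance) hKlt inf_le_right
      have hHSL : H ⊓ S ≤ L' := by rw [← heq]; exact inf_le_left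
      exact le_antisymm hle (sup_le hHSL hZL')
  have hπs : Function.Surjective (QuotientGroup.mk' Z) := QuotientGroup.mk'_surjective Z
  have hkerπ : (QuotientGroup.mk' Z).ker = Z := QuotientGroup.ker_mk' Z
  have hkerle : (QuotientGroup.mk' Z).ker ≤ (K ⊓ S) ⊔ Z := by
    rw [hkerπ]; exact le_sup_right
  have hchiefQ := chief_map (QuotientGroup.mk' Z) hπs hchief2 hkerle
  have hMle : ((H ⊓ S) ⊔ Z).map (QuotientGroup.mk' Z) ≤ ⨆ i, Hs i := by
    rw [hsup]
    exact Subgroup.map_mono (sup_le inf_le_right hZS)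
  have hLres := simple_factor_mid hinv hsimple hnonab hind hchiefQ hMle
  have key2 : ∀ L2 : Subgroup G, (K ⊓ S) ⊔ Z ≤ L2 → L2 ≤ (H ⊓ S) ⊔ Z →
      (∀ h ∈ (H ⊓ S) ⊔ Z, ∀ x ∈ L2, h * x * h⁻¹ ∈ L2) →
      L2 = (K ⊓ S) ⊔ Z ∨ L2 = (H ⊓ S) ⊔ Z := by
    intro L2 h1 h2 h3
    have hZL2 : Z ≤ L2 := le_sup_right.trans h1
    have hcom : ∀ X : Subgroup G, Z ≤ X →
        (X.map (QuotientGroup.mk' Z)).comap (QuotientGroup.mk' Z) = X := fun X hX => by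
      rw [Subgroup.comap_map_eq, hkerπ, sup_eq_left.mpr hX]
    have hmapnorm : ∀ h' ∈ ((H ⊓ S) ⊔ Z).map (QuotientGroup.mk' Z),
        ∀ x ∈ L2.map (QuotientGroup.mk' Z), h' * x * h'⁻¹ ∈ L2.map (QuotientGroup.mk' Z) := by
      rintro h' ⟨h, hh, rfl⟩ x ⟨y, hy, rfl⟩
      exact ⟨h * y * h⁻¹, h3 h hh y hy, by simp⟩
    rcases hLres _ (Subgroup.map_mono h1) (Subgroup.map_mono h2) hmapnorm with h | h
    · left; rw [← hcom _ hZL2, h, hcom _ le_sup_right]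
    · right; rw [← hcom _ hZL2, h, hcom _ le_sup_right]
  have key1 : ∀ L1 : Subgroup G, K ⊓ S ≤ L1 → L1 ≤ H ⊓ S →
      (∀ h ∈ H ⊓ S, ∀ x ∈ L1, h * x * h⁻¹ ∈ L1) → L1 = K ⊓ S ∨ L1 = H ⊓ S := by
    intro L1 h1 h2 h3
    have hnormer : (H ⊓ S) ⊔ Z ≤ Subgroup.normalizer ((L1 ⊔ Z : Subgroup G) : Set G) := by
      refine sup_le (norm_le ?_) (le_sup_right.trans Subgroup.le_normalizer)
      intro a ha x hx
      have hx' : x ∈ (L1 : Set G) * (Z : Set G) := by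
        rw [← Subgroup.mul_normal L1 Z]; exact hx
      obtain ⟨l, hl, z, hz, rfl⟩ := hx'
      have h5 : a * l * a⁻¹ ∈ L1 := h3 a ha l hl
      have h6 : a * z * a⁻¹ ∈ Z := ‹Z.Normal›.conj_mem z hz a
      have heq : a * (l * z) * a⁻¹ = (a * l * a⁻¹) * (a * z * a⁻¹) := by group
      rw [heq]
      exact mul_mem ((le_sup_left : L1 ≤ L1 ⊔ Z) h5) ((le_sup_right : Z ≤ L1 ⊔ Z) h6)
    have hn3 : ∀ h ∈ (H ⊓ S) ⊔ Z, ∀ x ∈ L1 ⊔ Z, h * x * h⁻¹ ∈ L1 ⊔ Z := by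
      intro h hh x hx
      have hmem := hnormer hh
      rw [Subgroup.mem_normalizer_iff] at hmem
      exact (hmem x).mp hx
    rcases key2 (L1 ⊔ Z) (sup_le_sup_right h1 Z) (sup_le_sup_right h2 Z) hn3 with h | h
    · left
      have h4 : L1 ≤ ((K ⊓ S) ⊔ Z) ⊓ (H ⊓ S) := le_inf (by rw [← h]; exact le_sup_left) h2
      rw [ded ‹Z.Normal› hlt1.le] at h4
      exact le_antisymm (h4.trans (sup_le le_rfl hZH1)) h1
    · right
      have h4 : H ⊓ S ≤ (L1 ⊔ Z) ⊓ (H ⊓ S) := le_inf (by rw [h]; exact le_sup_left) le_rfl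
      rw [ded ‹Z.Normal› h2] at h4
      exact le_antisymm h2 (h4.trans (sup_le le_rfl (hZH1.trans h1)))
  have h3' : ∀ h ∈ H ⊓ S, ∀ x ∈ L ⊓ S, h * x * h⁻¹ ∈ L ⊓ S := by
    intro h hh x hx
    rw [Subgroup.mem_inf] at hh hx ⊢
    exact ⟨hnorm h hh.1 x hx.1, ‹S.Normal›.conj_mem x hx.2 h⟩
  rcases key1 (L ⊓ S) (inf_le_inf_right S hKL) (inf_le_inf_right S hLH) h3' with h | h
  · left
    have h4 : L ≤ (K ⊔ (H ⊓ S)) ⊓ L := le_inf (by rw [hsupS]; exact hLH) le_rfl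
    rw [ded (inferInstance : (H ⊓ S).Normal) hKL] at h4
    have h5 : (H ⊓ S) ⊓ L ≤ K := by
      intro x hx
      rw [Subgroup.mem_inf, Subgroup.mem_inf] at hx
      have hmem : x ∈ L ⊓ S := Subgroup.mem_inf.mpr ⟨hx.2, hx.1.2⟩
      rw [h] at hmem
      exact (Subgroup.mem_inf.mp hmem).1
    exact le_antisymm (h4.trans (sup_le le_rfl h5)) hKL
  · right
    have h5 : H ⊓ S ≤ L := by rw [← h]; exact inf_le_left
    exact le_antisymm hLH (by rw [← hsupS]; exact sup_le hKL h5)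

end Middle

/-- If `Z ≤ S` are normal in `G`, every chief factor of `G` below `Z` is cyclic of
prime order, `S/Z` is a direct product of `G`-invariant simple nonabelian groups,
and `G/S` is supersoluble, then `G` is c-supersoluble. -/
theorem stmt_16 {G : Type*} [Group G] [Finite G] (Z S : Subgroup G)
    [Z.Normal] [S.Normal] (hZS : Z ≤ S)
    (hbelow : ∀ H K : Subgroup G, IsChiefFactor G H K → H ≤ Z →
      ∃ p : ℕ, p.Prime ∧ K.relIndex H = p)
    {n : ℕ} (Hs : Fin n → Subgroup (G ⧸ Z))
    (hinv : ∀ i, (Hs i).Normal)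
    (hsimple : ∀ i, IsSimpleGroup (Hs i))
    (hnonab : ∀ i, ∃ x ∈ Hs i, ∃ y ∈ Hs i, x * y ≠ y * x)
    (hind : iSupIndep Hs)
    (hsup : ⨆ i, Hs i = S.map (QuotientGroup.mk' Z))
    (habove : IsSupersoluble (G ⧸ S)) :
    IsCSupersoluble G := by
  intro H K hchief
  have hchief' := hchief
  obtain ⟨hHn, hKn, hKH, hmin⟩ := hchief
  haveI := hHn; haveI := hKn
  refine ⟨hKH, ?_⟩
  intro L hKL hLH hnorm
  by_cases hA : H ⊓ S ≤ K
  · -- top case: the factor is above `S`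
    have hd : (K ⊔ S) ⊓ H = K := by
      rw [ded ‹S.Normal› hKH.le, inf_comm S H, sup_eq_left.mpr hA]
    have hKS_lt : K ⊔ S < H ⊔ S := by
      refine lt_of_le_of_ne (sup_le_sup_right hKH.le S) fun he => ?_
      have hH : H ≤ (K ⊔ S) ⊓ H := le_inf (le_sup_left.trans he.symm.le) le_rfl
      rw [hd] at hH
      exact hKH.not_ge hH
    have hchiefT : IsChiefFactor G (H ⊔ S) (K ⊔ S) := by
      refine ⟨inferInstance, inferInstance, hKS_lt, ?_⟩
      intro L' hL'n hlt hle
      have hSL' : S ≤ L' := le_sup_right.trans hlt.le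
      by_cases hLH' : L' ⊓ H ≤ K
      · exfalso
        have h2 : (S ⊔ H) ⊓ L' = S ⊔ (H ⊓ L') := ded hHn hSL'
        have h3 : L' ≤ S ⊔ (H ⊓ L') := by
          rw [← h2]; exact le_inf (hle.trans (sup_comm H S).le) le_rfl
        have h4 : L' ≤ K ⊔ S := h3.trans (sup_le le_sup_right
          (le_trans (by rw [inf_comm]; exact hLH') le_sup_left))
        exact hlt.not_ge h4
      · have hKlt : K < L' ⊓ H :=
          lt_of_le_of_ne (le_inf (le_sup_left.trans hlt.le) hKH.le) fun he =>
            hLH' he.symm.le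
        have hLHeq : L' ⊓ H = H := hmin _ (by haveI := hL'n; infer_instance) hKlt inf_le_right
        have hHL' : H ≤ L' := by rw [← hLHeq]; exact inf_le_left
        exact le_antisymm hle (sup_le hHL' hSL')
    have hkerle : (QuotientGroup.mk' S).ker ≤ K ⊔ S := by
      rw [QuotientGroup.ker_mk']; exact le_sup_right
    obtain ⟨p, hp, hrel⟩ := habove _ _
      (chief_map (QuotientGroup.mk' S) (QuotientGroup.mk'_surjective S) hchiefT hkerle)
    have hrel' : (K ⊔ S).relIndex (H ⊔ S) = p := by
      rw [← relindex_map_of_ker_le (QuotientGroup.mk' S) hkerle]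
      exact hrel
    rcases rigid hp hKS_lt.le hrel' (sup_le_sup_right hKL S) (sup_le_sup_right hLH S)
      with h | h
    · left
      have hLle : L ≤ (K ⊔ S) ⊓ H := le_inf (by rw [← h]; exact le_sup_left) hLH
      rw [hd] at hLle
      exact le_antisymm hLle hKL
    · right
      have hd2 : (L ⊔ S) ⊓ H = L := by
        rw [ded ‹S.Normal› hLH, inf_comm S H, sup_eq_left.mpr (hA.trans hKL)]
      have hHle : H ≤ (L ⊔ S) ⊓ H := le_inf (by rw [h]; exact le_sup_left) le_rfl
      rw [hd2] at hHle
      exact le_antisymm hLH hHle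
  · by_cases hZH : Z ⊓ H ≤ K
    · -- middle case
      exact middle_case Z S hZS Hs hinv hsimple hnonab hind hsup hchief' hA hZH hKL hLH hnorm
    · -- bottom case: the factor is below `Z` (up to `K`)
      have hsupZ : K ⊔ (Z ⊓ H) = H := hmin _ inferInstance
        (lt_of_le_of_ne le_sup_left fun he => hZH (le_sup_right.trans he.symm.le))
        (sup_le hKH.le inf_le_right)
      have hlt0 : K ⊓ Z < H ⊓ Z := by
        refine lt_of_le_of_ne (inf_le_inf_right Z hKH.le) fun he => hZH ?_
        intro x hx
        rw [Subgroup.mem_inf] at hx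
        have hmem : x ∈ H ⊓ Z := Subgroup.mem_inf.mpr ⟨hx.2, hx.1⟩
        rw [← he] at hmem
        exact (Subgroup.mem_inf.mp hmem).1
      have hchief0 : IsChiefFactor G (H ⊓ Z) (K ⊓ Z) := by
        refine ⟨inferInstance, inferInstance, hlt0, ?_⟩
        intro L' hL'n hlt hle
        have hL'Z : L' ≤ Z := hle.trans inf_le_right
        have hKL' : K < K ⊔ L' := lt_of_le_of_ne le_sup_left fun he =>
          hlt.not_ge (le_inf (le_sup_right.trans he.symm.le) hL'Z)
        have hH : K ⊔ L' = H := hmin _ (by haveI := hL'n; infer_instance) hKL'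
          (sup_le hKH.le (hle.trans inf_le_left))
        calc L' = L' ⊔ (K ⊓ Z) := (sup_eq_left.mpr hlt.le).symm
          _ = (L' ⊔ K) ⊓ Z := (ded hKn hL'Z).symm
          _ = H ⊓ Z := by rw [sup_comm L' K, hH]
      obtain ⟨p, hp, hrel⟩ := hbelow _ _ hchief0 inf_le_right
      rcases rigid hp hlt0.le hrel (inf_le_inf_right Z hKL) (inf_le_inf_right Z hLH)
        with h | h
      · left
        have hded := ded (inferInstance : (Z ⊓ H).Normal) hKL
        have hL2 : L ≤ (K ⊔ (Z ⊓ H)) ⊓ L := le_inf (by rw [hsupZ]; exact hLH) le_rfl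
        rw [hded] at hL2
        refine le_antisymm (hL2.trans (sup_le le_rfl ?_)) hKL
        intro x hx
        rw [Subgroup.mem_inf, Subgroup.mem_inf] at hx
        have hmem : x ∈ L ⊓ Z := Subgroup.mem_inf.mpr ⟨hx.2, hx.1.1⟩
        rw [h] at hmem
        exact (Subgroup.mem_inf.mp hmem).1
      · right
        apply le_antisymm hLH
        rw [← hsupZ]
        refine sup_le hKL ?_
        intro x hx
        rw [Subgroup.mem_inf] at hx
        have hmem : x ∈ H ⊓ Z := Subgroup.mem_inf.mpr ⟨hx.2, hx.1⟩
        rw [← h] at hmem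
        exact (Subgroup.mem_inf.mp hmem).1
end
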